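/- Let ℓ(s) = 1 + |log s|, ℓℓ(s) = 1 + log ℓ(s), ℓℓℓ(s) = 1 + log ℓℓ(s). For q ∈ [1,∞) and λ < 0, one has ‖s^{λ - 1/q'} ℓ(s)^{-1/q'} ℓℓ(s)^{-1/q'} ℓℓℓ(s)^{-1}‖_{L^{q'}(r, 1-r)} ≈ r^{λ} ℓ(r)^{-1/q'} ℓℓ(r)^{-1/q'} ℓℓℓ(r)^{-1} near 0, with constants independent of r. -/

import Mathlib

open MeasureTheory Set Filter
open scoped ENNReal Topology
noncomputable def ell (s : ℝ) : ℝ := 1 + |Real.log s|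
noncomputable def ellell (s : ℝ) : ℝ := 1 + Real.log (ell s)
noncomputable def ellellell (s : ℝ) : ℝ := 1 + Real.log (ellell s)

lemma ell_ge_one (s : ℝ) : 1 ≤ ell s := by simp [ell, abs_nonneg]
lemma ell_pos (s : ℝ) : 0 < ell s := lt_of_lt_of_le one_pos (ell_ge_one s)
lemma ellell_ge_one (s : ℝ) : 1 ≤ ellell s := by
  have := Real.log_nonneg (ell_ge_one s); simp only [ellell]; linarith
lemma ellell_pos (s : ℝ) : 0 < ellell s := lt_of_lt_of_le one_pos (ellell_ge_one s)
lemma ellellell_ge_one (s : ℝ) : 1 ≤ ellellell s := by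
  have := Real.log_nonneg (ellell_ge_one s); simp only [ellellell]; linarith
lemma ellellell_pos (s : ℝ) : 0 < ellellell s := lt_of_lt_of_le one_pos (ellellell_ge_one s)
lemma ellell_le_ell (s : ℝ) : ellell s ≤ ell s := by
  have := Real.log_le_sub_one_of_pos (ell_pos s); simp only [ellell]; linarith
lemma ellellell_le_ellell (s : ℝ) : ellellell s ≤ ellell s := by
  have := Real.log_le_sub_one_of_pos (ellell_pos s); simp only [ellellell]; linarith
lemma ellellell_le_ell (s : ℝ) : ellellell s ≤ ell s :=
  (ellellell_le_ellell s).trans (ellell_le_ell s)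
lemma ell_eq {s : ℝ} (h0 : 0 < s) (h1 : s ≤ 1) : ell s = 1 - Real.log s := by
  have : Real.log s ≤ 0 := Real.log_nonpos h0.le h1
  simp [ell, abs_of_nonpos this]; ring
lemma ell_anti {s t : ℝ} (h0 : 0 < s) (hst : s ≤ t) (h1 : t ≤ 1) : ell t ≤ ell s := by
  rw [ell_eq h0 (hst.trans h1), ell_eq (h0.trans_le hst) h1]
  have := Real.log_le_log h0 hst
  linarith
lemma ellell_anti {s t : ℝ} (h0 : 0 < s) (hst : s ≤ t) (h1 : t ≤ 1) : ellell t ≤ ellell s := by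
  have := Real.log_le_log (ell_pos t) (ell_anti h0 hst h1)
  simp only [ellell]; linarith
lemma ellellell_anti {s t : ℝ} (h0 : 0 < s) (hst : s ≤ t) (h1 : t ≤ 1) :
    ellellell t ≤ ellellell s := by
  have := Real.log_le_log (ellell_pos t) (ellell_anti h0 hst h1)
  simp only [ellellell]; linarith
lemma ell_sqrt {r : ℝ} (h0 : 0 < r) (h1 : r ≤ 1) : ell r ≤ 2 * ell (Real.sqrt r) := by
  rw [ell_eq h0 h1, ell_eq (Real.sqrt_pos.2 h0) (Real.sqrt_le_one.mpr h1), Real.log_sqrt h0.le]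
  have : Real.log r ≤ 0 := Real.log_nonpos h0.le h1
  linarith
lemma ellell_sqrt {r : ℝ} (h0 : 0 < r) (h1 : r ≤ 1) (h2 : 2 ≤ ellell r) :
    ellell r ≤ 2 * ellell (Real.sqrt r) := by
  have h3 : ellell r - Real.log 2 ≤ ellell (Real.sqrt r) := by
    have l2 : Real.log (ell r) - Real.log 2 ≤ Real.log (ell (Real.sqrt r)) := by
      have := Real.log_le_log (ell_pos r) (ell_sqrt h0 h1)
      rw [Real.log_mul (by norm_num) (ell_pos (Real.sqrt r)).ne'] at this
      linarith
    simp only [ellell] at *; linarith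
  have hl2 : Real.log 2 ≤ 1 := by
    have := Real.log_le_sub_one_of_pos (by norm_num : (0:ℝ) < 2); linarith
  linarith
lemma ellellell_sqrt {r : ℝ} (h0 : 0 < r) (h1 : r ≤ 1) (h2 : 2 ≤ ellell r) :
    ellellell r ≤ 2 * ellellell (Real.sqrt r) := by
  have h3 : ellellell r - Real.log 2 ≤ ellellell (Real.sqrt r) := by
    have l2 : Real.log (ellell r) - Real.log 2 ≤ Real.log (ellell (Real.sqrt r)) := by
      have := Real.log_le_log (ellell_pos r) (ellell_sqrt h0 h1 h2)
      rw [Real.log_mul (by norm_num) (ellell_pos (Real.sqrt r)).ne'] at this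
      linarith
    simp only [ellellell] at *; linarith
  have hl2 : Real.log 2 ≤ 1 := by
    have := Real.log_le_sub_one_of_pos (by norm_num : (0:ℝ) < 2); linarith
  have h4 : 1 + Real.log 2 ≤ ellellell r := by
    have := Real.log_le_log (by norm_num : (0:ℝ) < 2) h2
    simp only [ellellell]; linarith
  linarith

lemma ell_mul_rpow_tendsto {ε : ℝ} (hε : 0 < ε) :
    Tendsto (fun r => ell r * r ^ ε) (𝓝[>] (0:ℝ)) (𝓝 0) := by
  have h1 : Tendsto (fun r : ℝ => r ^ ε) (𝓝[>] (0:ℝ)) (𝓝 0) := by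
    have := (Real.continuousAt_rpow_const 0 ε (Or.inr hε.le)).continuousWithinAt
      (s := Ioi (0:ℝ))
    simpa [Real.zero_rpow hε.ne', ContinuousWithinAt] using this
  have h2 := tendsto_log_mul_rpow_nhdsGT_zero hε
  have h3 : Tendsto (fun r : ℝ => r ^ ε - Real.log r * r ^ ε) (𝓝[>] (0:ℝ)) (𝓝 0) := by
    simpa using h1.sub h2
  refine h3.congr' ?_
  filter_upwards [Ioo_mem_nhdsGT_of_mem (by norm_num : (0:ℝ) ∈ Ico (0:ℝ) 1)] with r hr
  rw [ell_eq hr.1 hr.2.le]; ring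

lemma ellpow_mul_rpow_eventually {k δ : ℝ} (hk : 0 < k) (hδ : 0 < δ) :
    ∀ᶠ r in 𝓝[>] (0:ℝ), ell r ^ k * r ^ δ ≤ 1 := by
  have hc : Tendsto (fun x : ℝ => x ^ k) (𝓝 (0:ℝ)) (𝓝 0) := by
    simpa [ContinuousAt, Real.zero_rpow hk.ne'] using Real.continuousAt_rpow_const 0 k (Or.inr hk.le)
  have T : Tendsto (fun r => (ell r * r ^ (δ/k)) ^ k) (𝓝[>] (0:ℝ)) (𝓝 0) :=
    hc.comp (ell_mul_rpow_tendsto (div_pos hδ hk))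
  have hev : ∀ᶠ r in 𝓝[>] (0:ℝ), (ell r * r ^ (δ/k)) ^ k < 1 :=
    T.eventually_lt_const one_pos
  filter_upwards [hev, self_mem_nhdsWithin] with r h1 hr
  have hr0 : (0:ℝ) < r := hr
  have hdk : δ / k * k = δ := div_mul_cancel₀ δ hk.ne'
  have he : ell r ^ k * r ^ δ = (ell r * r ^ (δ/k)) ^ k := by
    rw [Real.mul_rpow (ell_pos r).le (Real.rpow_nonneg hr0.le _), ← Real.rpow_mul hr0.le, hdk]
  rw [he]; exact h1.le

noncomputable def gg (b p s : ℝ) : ℝ :=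
  s ^ b * ell s ^ (-1:ℝ) * ellell s ^ (-1:ℝ) * ellellell s ^ (-p)

lemma lower_finite {p lam r : ℝ} (hp : 0 < p) (hlam : lam < 0) (h0 : 0 < r) (hr : r < 1/4) :
    ENNReal.ofReal ((2:ℝ) ^ (p*lam-1) * gg (p*lam) p r) ≤
      ∫⁻ s in Ioo r (1-r), ENNReal.ofReal (gg (p*lam-1) p s) := by
  have hb : p*lam - 1 ≤ 0 := by nlinarith
  have hsub : Ioo r (2*r) ⊆ Ioo r (1-r) := fun s hs => ⟨hs.1, by
    rcases hs with ⟨h1, h2⟩; linarith⟩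
  set m : ℝ := (2*r) ^ (p*lam-1) * ell r ^ (-1:ℝ) * ellell r ^ (-1:ℝ) * ellellell r ^ (-p)
    with hm
  have key : ∀ s ∈ Ioo r (2*r), ENNReal.ofReal m ≤ ENNReal.ofReal (gg (p*lam-1) p s) := by
    intro s hs
    rcases hs with ⟨hs1, hs2⟩
    have hs0 : 0 < s := h0.trans hs1
    have hs1' : s ≤ 1 := by linarith
    apply ENNReal.ofReal_le_ofReal
    unfold gg
    have f1 : (2*r) ^ (p*lam-1) ≤ s ^ (p*lam-1) :=
      Real.rpow_le_rpow_of_nonpos hs0 hs2.le hb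
    have f2 : ell r ^ (-1:ℝ) ≤ ell s ^ (-1:ℝ) :=
      Real.rpow_le_rpow_of_nonpos (ell_pos s) (ell_anti h0 hs1.le hs1') (by norm_num)
    have f3 : ellell r ^ (-1:ℝ) ≤ ellell s ^ (-1:ℝ) :=
      Real.rpow_le_rpow_of_nonpos (ellell_pos s) (ellell_anti h0 hs1.le hs1') (by norm_num)
    have f4 : ellellell r ^ (-p) ≤ ellellell s ^ (-p) :=
      Real.rpow_le_rpow_of_nonpos (ellellell_pos s) (ellellell_anti h0 hs1.le hs1')
        (by linarith)
    have p1 : (0:ℝ) ≤ (2*r) ^ (p*lam-1) := Real.rpow_nonneg (by linarith) _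
    have p2 : (0:ℝ) ≤ ell r ^ (-1:ℝ) := Real.rpow_nonneg (ell_pos r).le _
    have p3 : (0:ℝ) ≤ ellell r ^ (-1:ℝ) := Real.rpow_nonneg (ellell_pos r).le _
    have p4 : (0:ℝ) ≤ ellellell r ^ (-p) := Real.rpow_nonneg (ellellell_pos r).le _
    have q2 : (0:ℝ) ≤ ell s ^ (-1:ℝ) := Real.rpow_nonneg (ell_pos s).le _
    have q3 : (0:ℝ) ≤ ellell s ^ (-1:ℝ) := Real.rpow_nonneg (ellell_pos s).le _
    have q4 : (0:ℝ) ≤ ellellell s ^ (-p) := Real.rpow_nonneg (ellellell_pos s).le _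
    calc m ≤ s ^ (p*lam-1) * ell s ^ (-1:ℝ) * ellell s ^ (-1:ℝ) * ellellell s ^ (-p) := by
          rw [hm]
          have n1 : (0:ℝ) ≤ s ^ (p*lam-1) := Real.rpow_nonneg hs0.le _
          exact mul_le_mul (mul_le_mul (mul_le_mul f1 f2 p2 n1) f3 p3
            (mul_nonneg n1 q2)) f4 p4 (mul_nonneg (mul_nonneg n1 q2) q3)
      _ = _ := rfl
  calc ENNReal.ofReal ((2:ℝ) ^ (p*lam-1) * gg (p*lam) p r)
      = ENNReal.ofReal m * volume (Ioo r (2*r)) := by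
        have hm0 : (0:ℝ) ≤ m := by
          rw [hm]
          exact mul_nonneg (mul_nonneg (mul_nonneg (Real.rpow_nonneg (by linarith) _)
            (Real.rpow_nonneg (ell_pos r).le _)) (Real.rpow_nonneg (ellell_pos r).le _))
            (Real.rpow_nonneg (ellellell_pos r).le _)
        rw [Real.volume_Ioo, show 2*r - r = r by ring, ← ENNReal.ofReal_mul hm0]
        congr 1
        rw [hm]
        unfold gg
        rw [Real.mul_rpow (by norm_num) h0.le, show p*lam = (p*lam-1) + 1 by ring,
          Real.rpow_add h0, Real.rpow_one]
        ring
    _ = ∫⁻ _ in Ioo r (2*r), ENNReal.ofReal m := (setLIntegral_const _ _).symm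
    _ ≤ ∫⁻ s in Ioo r (2*r), ENNReal.ofReal (gg (p*lam-1) p s) :=
        setLIntegral_mono' measurableSet_Ioo key
    _ ≤ ∫⁻ s in Ioo r (1-r), ENNReal.ofReal (gg (p*lam-1) p s) := lintegral_mono_set hsub

lemma upper_finite {p lam r : ℝ} (hp : 0 < p) (hlam : lam < 0) (h0 : 0 < r) (hr : r < 1/4)
    (h2 : 2 ≤ ellell r) (hB : ell r ^ (2+p) * r ^ (p*(-lam)/2) ≤ 1) :
    ∫⁻ s in Ioo r (1-r), ENNReal.ofReal (gg (p*lam-1) p s) ≤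
      ENNReal.ofReal (((2:ℝ)^((2:ℝ)+p) + 1) / (p*(-lam)) * gg (p*lam) p r) := by
  have hb : p*lam - 1 < -1 := by nlinarith
  have hr1 : r ≤ 1 := by linarith
  have hsq0 : 0 < Real.sqrt r := Real.sqrt_pos.2 h0
  have hsq1 : Real.sqrt r ≤ 1 := Real.sqrt_le_one.mpr hr1
  set H : ℝ := ell r ^ (-1:ℝ) * ellell r ^ (-1:ℝ) * ellellell r ^ (-p) with hH
  have hH0 : 0 ≤ H := by
    rw [hH]
    exact mul_nonneg (mul_nonneg (Real.rpow_nonneg (ell_pos r).le _)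
      (Real.rpow_nonneg (ellell_pos r).le _)) (Real.rpow_nonneg (ellellell_pos r).le _)
  have hsplit : Ioo r (1-r) ⊆ Ioo r (Real.sqrt r) ∪ Ico (Real.sqrt r) 1 := by
    intro s hs
    rcases lt_or_ge s (Real.sqrt r) with h | h
    · exact Or.inl ⟨hs.1, h⟩
    · exact Or.inr ⟨h, by linarith [hs.2]⟩
  -- pointwise bound on the first piece
  have key1 : ∀ s ∈ Ioo r (Real.sqrt r), ENNReal.ofReal (gg (p*lam-1) p s) ≤
      ENNReal.ofReal ((2:ℝ)^((2:ℝ)+p) * H * s ^ (p*lam-1)) := by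
    intro s hs
    rcases hs with ⟨hs1, hs2⟩
    have hs0 : 0 < s := h0.trans hs1
    have hss1 : s ≤ 1 := hs2.le.trans hsq1
    have n1 : (0:ℝ) ≤ s ^ (p*lam-1) := Real.rpow_nonneg hs0.le _
    apply ENNReal.ofReal_le_ofReal
    have f2 : ell s ^ (-1:ℝ) ≤ 2 * ell r ^ (-1:ℝ) := by
      have h1 : ell r / 2 ≤ ell s := by
        have := ell_sqrt h0 hr1
        have := ell_anti hs0 hs2.le hsq1
        linarith
      have := Real.rpow_le_rpow_of_nonpos (by linarith [ell_pos r] : (0:ℝ) < ell r / 2) h1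
        (by norm_num : (-1:ℝ) ≤ 0)
      calc ell s ^ (-1:ℝ) ≤ (ell r / 2) ^ (-1:ℝ) := this
        _ = 2 * ell r ^ (-1:ℝ) := by
            rw [Real.rpow_neg_one, Real.rpow_neg_one]
            field_simp
    have f3 : ellell s ^ (-1:ℝ) ≤ 2 * ellell r ^ (-1:ℝ) := by
      have h1 : ellell r / 2 ≤ ellell s := by
        have := ellell_sqrt h0 hr1 h2
        have := ellell_anti hs0 hs2.le hsq1
        linarith
      have := Real.rpow_le_rpow_of_nonpos (by linarith [ellell_pos r] : (0:ℝ) < ellell r / 2)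
        h1 (by norm_num : (-1:ℝ) ≤ 0)
      calc ellell s ^ (-1:ℝ) ≤ (ellell r / 2) ^ (-1:ℝ) := this
        _ = 2 * ellell r ^ (-1:ℝ) := by
            rw [Real.rpow_neg_one, Real.rpow_neg_one]
            field_simp
    have f4 : ellellell s ^ (-p) ≤ 2 ^ p * ellellell r ^ (-p) := by
      have h1 : ellellell r / 2 ≤ ellellell s := by
        have := ellellell_sqrt h0 hr1 h2
        have := ellellell_anti hs0 hs2.le hsq1
        linarith
      have h5 := Real.rpow_le_rpow_of_nonpos
        (by linarith [ellellell_pos r] : (0:ℝ) < ellellell r / 2) h1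
        (by linarith : -p ≤ 0)
      calc ellellell s ^ (-p) ≤ (ellellell r / 2) ^ (-p) := h5
        _ = 2 ^ p * ellellell r ^ (-p) := by
            rw [Real.rpow_neg (div_pos (ellellell_pos r) two_pos).le,
              Real.div_rpow (ellellell_pos r).le (by norm_num : (0:ℝ) ≤ 2), inv_div,
              Real.rpow_neg (ellellell_pos r).le, div_eq_mul_inv]
    have q2 : (0:ℝ) ≤ ell s ^ (-1:ℝ) := Real.rpow_nonneg (ell_pos s).le _
    have q3 : (0:ℝ) ≤ ellell s ^ (-1:ℝ) := Real.rpow_nonneg (ellell_pos s).le _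
    have e2 : (0:ℝ) ≤ 2 * ell r ^ (-1:ℝ) := mul_nonneg (by norm_num) (Real.rpow_nonneg (ell_pos r).le _)
    have e3 : (0:ℝ) ≤ 2 * ellell r ^ (-1:ℝ) := mul_nonneg (by norm_num) (Real.rpow_nonneg (ellell_pos r).le _)
    have e4 : (0:ℝ) ≤ 2 ^ p * ellellell r ^ (-p) := mul_nonneg (Real.rpow_nonneg (by norm_num) _) (Real.rpow_nonneg (ellellell_pos r).le _)
    calc gg (p*lam-1) p s
        = s ^ (p*lam-1) * ell s ^ (-1:ℝ) * ellell s ^ (-1:ℝ) * ellellell s ^ (-p) := rfl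
      _ ≤ s ^ (p*lam-1) * (2 * ell r ^ (-1:ℝ)) * (2 * ellell r ^ (-1:ℝ)) *
            (2 ^ p * ellellell r ^ (-p)) := by
          exact mul_le_mul (mul_le_mul (mul_le_mul (le_refl _) f2 q2 n1) f3 q3
            (mul_nonneg n1 e2)) f4 (Real.rpow_nonneg (ellellell_pos s).le _)
            (mul_nonneg (mul_nonneg n1 e2) e3)
      _ = (2:ℝ)^((2:ℝ)+p) * H * s ^ (p*lam-1) := by
          rw [hH, Real.rpow_add (by norm_num : (0:ℝ) < 2),
            show ((2:ℝ))^(2:ℝ) = 4 by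
              rw [show (2:ℝ) = ((2:ℕ):ℝ) by norm_num, Real.rpow_natCast]; norm_num]
          ring
  -- pointwise bound on the second piece
  have key2 : ∀ s ∈ Ico (Real.sqrt r) 1, ENNReal.ofReal (gg (p*lam-1) p s) ≤
      ENNReal.ofReal (s ^ (p*lam-1)) := by
    intro s hs
    have hs0 : 0 < s := hsq0.trans_le hs.1
    have n1 : (0:ℝ) ≤ s ^ (p*lam-1) := Real.rpow_nonneg hs0.le _
    apply ENNReal.ofReal_le_ofReal
    have f2 : ell s ^ (-1:ℝ) ≤ 1 :=
      Real.rpow_le_one_of_one_le_of_nonpos (ell_ge_one s) (by norm_num)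
    have f3 : ellell s ^ (-1:ℝ) ≤ 1 :=
      Real.rpow_le_one_of_one_le_of_nonpos (ellell_ge_one s) (by norm_num)
    have f4 : ellellell s ^ (-p) ≤ 1 :=
      Real.rpow_le_one_of_one_le_of_nonpos (ellellell_ge_one s) (by linarith)
    have q2 : (0:ℝ) ≤ ell s ^ (-1:ℝ) := Real.rpow_nonneg (ell_pos s).le _
    have q3 : (0:ℝ) ≤ ellell s ^ (-1:ℝ) := Real.rpow_nonneg (ellell_pos s).le _
    have q4 : (0:ℝ) ≤ ellellell s ^ (-p) := Real.rpow_nonneg (ellellell_pos s).le _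
    calc gg (p*lam-1) p s
        = s ^ (p*lam-1) * ell s ^ (-1:ℝ) * ellell s ^ (-1:ℝ) * ellellell s ^ (-p) := rfl
      _ ≤ s ^ (p*lam-1) * 1 * 1 * 1 := by
          exact mul_le_mul (mul_le_mul (mul_le_mul (le_refl _) f2 q2 n1) f3 q3
            (by linarith [mul_le_mul (le_refl (s ^ (p*lam-1))) f2 q2 n1])) f4 q4
            (by nlinarith)
      _ = s ^ (p*lam-1) := by ring
  have plam_pos : 0 < p * (-lam) := mul_pos hp (by linarith)
  have int1 : ∫⁻ s in Ioo r (Real.sqrt r), ENNReal.ofReal (gg (p*lam-1) p s) ≤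
      ENNReal.ofReal ((2:ℝ)^((2:ℝ)+p) * H * (r ^ (p*lam) / (p*(-lam)))) := by
    calc ∫⁻ s in Ioo r (Real.sqrt r), ENNReal.ofReal (gg (p*lam-1) p s)
        ≤ ∫⁻ s in Ioo r (Real.sqrt r),
            ENNReal.ofReal ((2:ℝ)^((2:ℝ)+p) * H * s ^ (p*lam-1)) :=
          setLIntegral_mono' measurableSet_Ioo key1
      _ ≤ ∫⁻ s in Ioi r, ENNReal.ofReal ((2:ℝ)^((2:ℝ)+p) * H * s ^ (p*lam-1)) :=
          lintegral_mono_set (fun s hs => hs.1)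
      _ = ENNReal.ofReal (∫ s in Ioi r, (2:ℝ)^((2:ℝ)+p) * H * s ^ (p*lam-1)) := by
          rw [MeasureTheory.ofReal_integral_eq_lintegral_ofReal]
          · exact (integrableOn_Ioi_rpow_of_lt hb h0).const_mul _
          · filter_upwards [ae_restrict_mem measurableSet_Ioi] with s hs
            exact mul_nonneg (mul_nonneg (Real.rpow_nonneg (by norm_num) _) hH0)
              (Real.rpow_nonneg (le_of_lt (h0.trans hs)) _)
      _ = ENNReal.ofReal ((2:ℝ)^((2:ℝ)+p) * H * (r ^ (p*lam) / (p*(-lam)))) := by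
          rw [MeasureTheory.integral_const_mul, integral_Ioi_rpow_of_lt hb h0]
          congr 1
          rw [show p*lam-1+1 = p*lam by ring]
          field_simp
  have sqrt_rpow : Real.sqrt r ^ (p*lam) = r ^ (p*lam/2) := by
    rw [Real.sqrt_eq_rpow, ← Real.rpow_mul h0.le, show (1:ℝ)/2*(p*lam) = p*lam/2 by ring]
  have hstep : r ^ (p*lam/2) ≤ r ^ (p*lam) * H := by
    have hδ : r ^ (p*lam/2) = r ^ (p*lam) * r ^ (p*(-lam)/2) := by
      rw [← Real.rpow_add h0]; ring_nf
    rw [hδ]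
    apply mul_le_mul_of_nonneg_left ?_ (Real.rpow_nonneg h0.le _)
    have hE : (0:ℝ) < ell r * ellell r * ellellell r ^ p :=
      mul_pos (mul_pos (ell_pos r) (ellell_pos r)) (Real.rpow_pos_of_pos (ellellell_pos r) p)
    have hHE : H = (ell r * ellell r * ellellell r ^ p)⁻¹ := by
      rw [hH, Real.rpow_neg_one, Real.rpow_neg_one, Real.rpow_neg (ellellell_pos r).le,
        mul_inv, mul_inv]
    rw [hHE, ← one_div, le_div_iff₀ hE]
    have hprod : ell r * ellell r * ellellell r ^ p ≤ ell r ^ ((2:ℝ)+p) := by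
      rw [show (2:ℝ)+p = 1+1+p by ring, Real.rpow_add (ell_pos r), Real.rpow_add (ell_pos r),
        Real.rpow_one]
      have h6 : ellellell r ^ p ≤ ell r ^ p :=
        Real.rpow_le_rpow (ellellell_pos r).le (ellellell_le_ell r) hp.le
      have h7 : ellell r ≤ ell r := ellell_le_ell r
      have := mul_le_mul (mul_le_mul (le_refl (ell r)) h7 (ellell_pos r).le (ell_pos r).le)
        h6 (Real.rpow_nonneg (ellellell_pos r).le _)
        (mul_nonneg (ell_pos r).le (ell_pos r).le)
      linarith [this]
    calc r ^ (p*(-lam)/2) * (ell r * ellell r * ellellell r ^ p)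
        ≤ r ^ (p*(-lam)/2) * ell r ^ ((2:ℝ)+p) :=
          mul_le_mul_of_nonneg_left hprod (Real.rpow_nonneg h0.le _)
      _ ≤ 1 := by rw [mul_comm]; exact hB
  have int2 : ∫⁻ s in Ico (Real.sqrt r) 1, ENNReal.ofReal (gg (p*lam-1) p s) ≤
      ENNReal.ofReal (r ^ (p*lam) * H / (p*(-lam))) := by
    calc ∫⁻ s in Ico (Real.sqrt r) 1, ENNReal.ofReal (gg (p*lam-1) p s)
        ≤ ∫⁻ s in Ico (Real.sqrt r) 1, ENNReal.ofReal (s ^ (p*lam-1)) :=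
          setLIntegral_mono' measurableSet_Ico key2
      _ ≤ ∫⁻ s in Ici (Real.sqrt r), ENNReal.ofReal (s ^ (p*lam-1)) :=
          lintegral_mono_set (fun s hs => hs.1)
      _ = ∫⁻ s in Ioi (Real.sqrt r), ENNReal.ofReal (s ^ (p*lam-1)) := by
          rw [MeasureTheory.restrict_Ioi_eq_restrict_Ici]
      _ = ENNReal.ofReal (∫ s in Ioi (Real.sqrt r), s ^ (p*lam-1)) := by
          rw [MeasureTheory.ofReal_integral_eq_lintegral_ofReal]
          · exact integrableOn_Ioi_rpow_of_lt hb hsq0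
          · filter_upwards [ae_restrict_mem measurableSet_Ioi] with s hs
            exact Real.rpow_nonneg (le_of_lt (hsq0.trans hs)) _
      _ ≤ ENNReal.ofReal (r ^ (p*lam) * H / (p*(-lam))) := by
          apply ENNReal.ofReal_le_ofReal
          rw [integral_Ioi_rpow_of_lt hb hsq0, show p*lam-1+1 = p*lam by ring, sqrt_rpow]
          have hneg : -r ^ (p*lam/2) / (p*lam) = r ^ (p*lam/2) / (p*(-lam)) := by
            rw [show p*(-lam) = -(p*lam) by ring, div_neg, neg_div]
          rw [hneg]
          exact (div_le_div_iff_of_pos_right plam_pos).mpr hstep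
  calc ∫⁻ s in Ioo r (1-r), ENNReal.ofReal (gg (p*lam-1) p s)
      ≤ ∫⁻ s in Ioo r (Real.sqrt r) ∪ Ico (Real.sqrt r) 1,
          ENNReal.ofReal (gg (p*lam-1) p s) := lintegral_mono_set hsplit
    _ ≤ (∫⁻ s in Ioo r (Real.sqrt r), ENNReal.ofReal (gg (p*lam-1) p s)) +
          ∫⁻ s in Ico (Real.sqrt r) 1, ENNReal.ofReal (gg (p*lam-1) p s) :=
        lintegral_union_le _ _ _
    _ ≤ ENNReal.ofReal ((2:ℝ)^((2:ℝ)+p) * H * (r ^ (p*lam) / (p*(-lam)))) +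
          ENNReal.ofReal (r ^ (p*lam) * H / (p*(-lam))) := add_le_add int1 int2
    _ = ENNReal.ofReal ((2:ℝ)^((2:ℝ)+p) * H * (r ^ (p*lam) / (p*(-lam))) +
          r ^ (p*lam) * H / (p*(-lam))) := by
        rw [ENNReal.ofReal_add]
        · exact mul_nonneg (mul_nonneg (Real.rpow_nonneg (by norm_num) _) hH0)
            (div_nonneg (Real.rpow_nonneg h0.le _) plam_pos.le)
        · exact div_nonneg (mul_nonneg (Real.rpow_nonneg h0.le _) hH0) plam_pos.le
    _ = ENNReal.ofReal (((2:ℝ)^((2:ℝ)+p) + 1) / (p*(-lam)) * gg (p*lam) p r) := by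
        congr 1
        unfold gg
        rw [hH]
        field_simp
        ring

lemma prod_rpow {p x : ℝ} (a : ℝ) (hp : 0 < p) (hx : 0 < x) :
    (x ^ a * ell x ^ (-(p⁻¹)) * ellell x ^ (-(p⁻¹)) * ellellell x ^ (-1:ℝ)) ^ p
      = gg (p*a) p x := by
  unfold gg
  rw [Real.mul_rpow (mul_nonneg (mul_nonneg (Real.rpow_nonneg hx.le _)
        (Real.rpow_nonneg (ell_pos x).le _)) (Real.rpow_nonneg (ellell_pos x).le _))
      (Real.rpow_nonneg (ellellell_pos x).le _),
    Real.mul_rpow (mul_nonneg (Real.rpow_nonneg hx.le _) (Real.rpow_nonneg (ell_pos x).le _))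
      (Real.rpow_nonneg (ellell_pos x).le _),
    Real.mul_rpow (Real.rpow_nonneg hx.le _) (Real.rpow_nonneg (ell_pos x).le _),
    ← Real.rpow_mul hx.le, ← Real.rpow_mul (ell_pos x).le, ← Real.rpow_mul (ellell_pos x).le,
    ← Real.rpow_mul (ellellell_pos x).le]
  rw [show a * p = p * a by ring, show -p⁻¹ * p = -1 by field_simp, show -1 * p = -p by ring]

lemma ellell_ge_two {r : ℝ} (h0 : 0 < r) (hr : r ≤ Real.exp (-2)) : 2 ≤ ellell r := by
  have h1 : Real.log r ≤ -2 := by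
    calc Real.log r ≤ Real.log (Real.exp (-2)) := Real.log_le_log h0 hr
      _ = -2 := Real.log_exp _
  have h3 : 3 ≤ ell r := by
    have : (2:ℝ) ≤ |Real.log r| := le_trans (by linarith) (neg_le_abs _)
    simp only [ell]; linarith
  have he3 : Real.exp 1 ≤ 3 := by
    have := Real.exp_one_lt_d9; linarith
  have : (1:ℝ) ≤ Real.log (ell r) := by
    calc (1:ℝ) = Real.log (Real.exp 1) := (Real.log_exp 1).symm
      _ ≤ Real.log 3 := Real.log_le_log (Real.exp_pos 1) he3
      _ ≤ Real.log (ell r) := Real.log_le_log (by norm_num) h3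
  simp only [ellell]; linarith

lemma top_lower {lam r : ℝ} (hlam : lam < 0) (h0 : 0 < r) (hr : r < 1/4) :
    ∀ s ∈ Ioo r (2*r), (2:ℝ)^lam * (r ^ lam * ellellell r ^ (-1:ℝ)) ≤
      s ^ lam * ellellell s ^ (-1:ℝ) := by
  intro s hs
  rcases hs with ⟨hs1, hs2⟩
  have hs0 : 0 < s := h0.trans hs1
  have hss1 : s ≤ 1 := by linarith
  have f1 : (2*r) ^ lam ≤ s ^ lam := Real.rpow_le_rpow_of_nonpos hs0 hs2.le hlam.le
  have f2 : ellellell r ^ (-1:ℝ) ≤ ellellell s ^ (-1:ℝ) :=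
    Real.rpow_le_rpow_of_nonpos (ellellell_pos s) (ellellell_anti h0 hs1.le hss1)
      (by norm_num)
  have e1 : (2*r) ^ lam = 2 ^ lam * r ^ lam := Real.mul_rpow (by norm_num) h0.le
  calc (2:ℝ)^lam * (r ^ lam * ellellell r ^ (-1:ℝ))
      = (2*r) ^ lam * ellellell r ^ (-1:ℝ) := by rw [e1]; ring
    _ ≤ s ^ lam * ellellell s ^ (-1:ℝ) :=
        mul_le_mul f1 f2 (Real.rpow_nonneg (ellellell_pos r).le _)
          (Real.rpow_nonneg hs0.le _)

lemma top_upper {lam r : ℝ} (hlam : lam < 0) (h0 : 0 < r) (hr : r < 1/4)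
    (h2 : 2 ≤ ellell r) (hB : ell r * r ^ (-lam/2) ≤ 1) :
    ∀ s ∈ Ioo r (1-r), s ^ lam * ellellell s ^ (-1:ℝ) ≤
      2 * (r ^ lam * ellellell r ^ (-1:ℝ)) := by
  intro s hs
  rcases hs with ⟨hs1, hs2⟩
  have hr1 : r ≤ 1 := by linarith
  have hs0 : 0 < s := h0.trans hs1
  have hss1 : s ≤ 1 := by linarith
  have hsq0 : 0 < Real.sqrt r := Real.sqrt_pos.2 h0
  have hsq1 : Real.sqrt r ≤ 1 := Real.sqrt_le_one.mpr hr1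
  rcases lt_or_ge s (Real.sqrt r) with h | h
  · have f1 : s ^ lam ≤ r ^ lam := Real.rpow_le_rpow_of_nonpos h0 hs1.le hlam.le
    have f2 : ellellell s ^ (-1:ℝ) ≤ 2 * ellellell r ^ (-1:ℝ) := by
      have h1 : ellellell r / 2 ≤ ellellell s := by
        have := ellellell_sqrt h0 hr1 h2
        have := ellellell_anti hs0 h.le hsq1
        linarith
      have h5 := Real.rpow_le_rpow_of_nonpos
        (div_pos (ellellell_pos r) two_pos) h1 (by norm_num : (-1:ℝ) ≤ 0)
      calc ellellell s ^ (-1:ℝ) ≤ (ellellell r / 2) ^ (-1:ℝ) := h5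
        _ = 2 * ellellell r ^ (-1:ℝ) := by
            rw [Real.rpow_neg_one, Real.rpow_neg_one]; field_simp
    calc s ^ lam * ellellell s ^ (-1:ℝ)
        ≤ r ^ lam * (2 * ellellell r ^ (-1:ℝ)) :=
          mul_le_mul f1 f2 (Real.rpow_nonneg (ellellell_pos s).le _)
            (Real.rpow_nonneg h0.le _)
      _ = 2 * (r ^ lam * ellellell r ^ (-1:ℝ)) := by ring
  · have f1 : s ^ lam ≤ Real.sqrt r ^ lam := Real.rpow_le_rpow_of_nonpos hsq0 h hlam.le
    have f2 : Real.sqrt r ^ lam = r ^ lam * r ^ (-lam/2) := by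
      rw [Real.sqrt_eq_rpow, ← Real.rpow_mul h0.le, ← Real.rpow_add h0]
      rw [show (1:ℝ)/2*lam = lam + -lam/2 by ring]
    have f3 : r ^ (-lam/2) ≤ (ell r)⁻¹ := by
      rw [← one_div, le_div_iff₀ (ell_pos r)]
      calc r ^ (-lam/2) * ell r = ell r * r ^ (-lam/2) := by ring
        _ ≤ 1 := hB
    have f4 : (ell r)⁻¹ ≤ (ellellell r)⁻¹ :=
      by rw [← one_div, ← one_div]; exact one_div_le_one_div_of_le (ellellell_pos r) (ellellell_le_ell r)
    have f5 : ellellell s ^ (-1:ℝ) ≤ 1 :=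
      Real.rpow_le_one_of_one_le_of_nonpos (ellellell_ge_one s) (by norm_num)
    have hsl : (0:ℝ) ≤ s ^ lam := Real.rpow_nonneg hs0.le _
    calc s ^ lam * ellellell s ^ (-1:ℝ)
        ≤ s ^ lam * 1 := mul_le_mul_of_nonneg_left f5 hsl
      _ = s ^ lam := by ring
      _ ≤ r ^ lam * r ^ (-lam/2) := f2 ▸ f1
      _ ≤ r ^ lam * (ellellell r)⁻¹ :=
          mul_le_mul_of_nonneg_left (f3.trans f4) (Real.rpow_nonneg h0.le _)
      _ = r ^ lam * ellellell r ^ (-1:ℝ) := by rw [Real.rpow_neg_one]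
      _ ≤ 2 * (r ^ lam * ellellell r ^ (-1:ℝ)) := by
          have : (0:ℝ) ≤ r ^ lam * ellellell r ^ (-1:ℝ) :=
            mul_nonneg (Real.rpow_nonneg h0.le _) (Real.rpow_nonneg (ellellell_pos r).le _)
          linarith

lemma exists_forall_Ioo {P : ℝ → Prop} (hP : ∀ᶠ r in 𝓝[>] (0:ℝ), P r) :
    ∃ r₀ : ℝ, 0 < r₀ ∧ ∀ r ∈ Ioo (0:ℝ) r₀, P r := by
  rw [(nhdsGT_basis (0:ℝ)).eventually_iff] at hP
  obtain ⟨r₀, h1, h2⟩ := hP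
  exact ⟨r₀, h1, fun r hr => h2 hr⟩

lemma ev_lt {a : ℝ} (ha : 0 < a) : ∀ᶠ r in 𝓝[>] (0:ℝ), r < a := by
  filter_upwards [Ioo_mem_nhdsGT_of_mem (left_mem_Ico.2 ha)] with r hr using hr.2

/-- For `q ∈ [1,∞)` and `λ < 0`:
`‖s^{λ-1/q'} ℓ(s)^{-1/q'} ℓℓ(s)^{-1/q'} ℓℓℓ(s)^{-1}‖_{L^{q'}(r,1-r)}
  ≈ r^λ ℓ(r)^{-1/q'} ℓℓ(r)^{-1/q'} ℓℓℓ(r)^{-1}` near `0`. -/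
theorem stmt15 (q q' : ℝ≥0∞) (hq : 1 ≤ q) (hq' : q ≠ ⊤) (hconj : 1 / q + 1 / q' = 1)
    (lam : ℝ) (hlam : lam < 0) :
    ∃ c C r₀ : ℝ, 0 < c ∧ 0 < C ∧ 0 < r₀ ∧
      ∀ r ∈ Set.Ioo (0 : ℝ) r₀,
        ENNReal.ofReal (c * (r ^ lam * ell r ^ (-(1 / q').toReal) *
            ellell r ^ (-(1 / q').toReal) * ellellell r ^ (-1 : ℝ))) ≤
            eLpNorm (fun s : ℝ =>
                s ^ (lam - (1 / q').toReal) * ell s ^ (-(1 / q').toReal) *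
                  ellell s ^ (-(1 / q').toReal) * ellellell s ^ (-1 : ℝ))
              q' (volume.restrict (Set.Ioo r (1 - r))) ∧
          eLpNorm (fun s : ℝ =>
                s ^ (lam - (1 / q').toReal) * ell s ^ (-(1 / q').toReal) *
                  ellell s ^ (-(1 / q').toReal) * ellellell s ^ (-1 : ℝ))
              q' (volume.restrict (Set.Ioo r (1 - r))) ≤
            ENNReal.ofReal (C * (r ^ lam * ell r ^ (-(1 / q').toReal) *
              ellell r ^ (-(1 / q').toReal) * ellellell r ^ (-1 : ℝ))) := by
  rcases eq_or_lt_of_le hq with hq1 | hq1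
  · -- q = 1, so q' = ⊤
    have hq'top : q' = ⊤ := by
      rw [← hq1] at hconj
      have h1 : (1:ℝ≥0∞) + 1/q' = 1 + 0 := by simpa using hconj
      have h2 : 1/q' = 0 := (ENNReal.add_right_inj ENNReal.one_ne_top).mp h1
      rcases ENNReal.div_eq_zero_iff.mp h2 with h | h
      · exact absurd h one_ne_zero
      · exact h
    subst hq'top
    have hsimp : (1/(⊤:ℝ≥0∞)).toReal = 0 := by simp
    simp only [hsimp, neg_zero, Real.rpow_zero, mul_one, sub_zero, eLpNorm_exponent_top]
    have hev : ∀ᶠ r in 𝓝[>] (0:ℝ), (r < 1/4 ∧ r ≤ Real.exp (-2)) ∧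
        ell r * r ^ (-lam/2) ≤ 1 := by
      have e1 := ev_lt (by norm_num : (0:ℝ) < 1/4)
      have e2 := (ev_lt (Real.exp_pos (-2))).mono (fun r h => h.le)
      have e3 := ellpow_mul_rpow_eventually (k := 1) (δ := -lam/2) one_pos (by linarith)
      filter_upwards [e1, e2, e3] with r h1 h2 h3
      refine ⟨⟨h1, h2⟩, ?_⟩
      rwa [Real.rpow_one] at h3
    obtain ⟨r₀, hr₀pos, hr₀⟩ := exists_forall_Ioo hev
    refine ⟨(2:ℝ)^lam, 2, r₀, Real.rpow_pos_of_pos two_pos lam, two_pos, hr₀pos, ?_⟩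
    intro r hr
    obtain ⟨⟨hr4, hre⟩, hB⟩ := hr₀ r hr
    have h0 : 0 < r := hr.1
    have h2 : 2 ≤ ellell r := ellell_ge_two h0 hre
    have hsub : Ioo r (2*r) ⊆ Ioo r (1-r) := fun s hs => ⟨hs.1, by
      rcases hs with ⟨u, v⟩; linarith⟩
    constructor
    · -- lower bound via essSup
      have hae := enorm_ae_le_eLpNormEssSup
        (fun s : ℝ => s ^ lam * ellellell s ^ (-1:ℝ)) (volume.restrict (Ioo r (1-r)))
      have hμ : volume.restrict (Ioo r (1-r)) (Ioo r (2*r)) ≠ 0 := by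
        rw [Measure.restrict_apply measurableSet_Ioo,
          inter_eq_self_of_subset_left hsub, Real.volume_Ioo]
        simp only [ne_eq, ENNReal.ofReal_eq_zero, not_le]
        linarith
      have hne : ¬ (∀ᵐ x ∂(volume.restrict (Ioo r (1-r))), x ∉ Ioo r (2*r)) := by
        intro hcon
        apply hμ
        have := hcon
        rw [ae_iff] at this
        simpa [Set.Ioo] using this
      obtain ⟨s, hs1, hs2⟩ := ((Filter.not_eventually.mp hne).and_eventually hae).exists
      have hsmem : s ∈ Ioo r (2*r) := not_not.mp hs1
      have hs0 : 0 < s := h0.trans hsmem.1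
      have hfs0 : 0 ≤ s ^ lam * ellellell s ^ (-1:ℝ) :=
        mul_nonneg (Real.rpow_nonneg hs0.le _) (Real.rpow_nonneg (ellellell_pos s).le _)
      calc ENNReal.ofReal ((2:ℝ)^lam * (r ^ lam * ellellell r ^ (-1:ℝ)))
          ≤ ENNReal.ofReal (s ^ lam * ellellell s ^ (-1:ℝ)) :=
            ENNReal.ofReal_le_ofReal (top_lower hlam h0 hr4 s hsmem)
        _ = ‖s ^ lam * ellellell s ^ (-1:ℝ)‖ₑ := (Real.enorm_eq_ofReal hfs0).symm
        _ ≤ _ := hs2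
    · -- upper bound via essSup
      apply eLpNormEssSup_le_of_ae_bound (C := 2 * (r ^ lam * ellellell r ^ (-1:ℝ)))
      filter_upwards [ae_restrict_mem measurableSet_Ioo] with s hs
      have hs0 : 0 < s := h0.trans hs.1
      have hfs0 : 0 ≤ s ^ lam * ellellell s ^ (-1:ℝ) :=
        mul_nonneg (Real.rpow_nonneg hs0.le _) (Real.rpow_nonneg (ellellell_pos s).le _)
      rw [Real.norm_of_nonneg hfs0]
      exact top_upper hlam h0 hr4 h2 hB s hs
  · -- 1 < q, so q' is finite
    have hq'top : q' ≠ ⊤ := by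
      intro h
      rw [h] at hconj
      simp only [ENNReal.div_top, add_zero] at hconj
      rw [one_div, ENNReal.inv_eq_one] at hconj
      exact hq1.ne' hconj
    have hq'0 : q' ≠ 0 := by
      intro h
      rw [h] at hconj
      simp at hconj
    set p := q'.toReal with hpdef
    have hp : 0 < p := ENNReal.toReal_pos hq'0 hq'top
    have htr : (1/q').toReal = p⁻¹ := by rw [one_div, ENNReal.toReal_inv]
    simp only [htr]
    have hev : ∀ᶠ r in 𝓝[>] (0:ℝ), (r < 1/4 ∧ r ≤ Real.exp (-2)) ∧
        ell r ^ ((2:ℝ)+p) * r ^ (p*(-lam)/2) ≤ 1 := by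
      have e1 := ev_lt (by norm_num : (0:ℝ) < 1/4)
      have e2 := (ev_lt (Real.exp_pos (-2))).mono (fun r h => h.le)
      have e3 := ellpow_mul_rpow_eventually (k := (2:ℝ)+p) (δ := p*(-lam)/2)
        (by linarith) (by have := mul_pos hp (neg_pos.mpr hlam); linarith)
      filter_upwards [e1, e2, e3] with r h1 h2 h3 using ⟨⟨h1, h2⟩, h3⟩
    obtain ⟨r₀, hr₀pos, hr₀⟩ := exists_forall_Ioo hev
    have hK : (0:ℝ) < ((2:ℝ)^((2:ℝ)+p) + 1) / (p*(-lam)) := by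
      apply div_pos
      · have := Real.rpow_pos_of_pos (two_pos (α := ℝ)) ((2:ℝ)+p); linarith
      · exact mul_pos hp (by linarith)
    refine ⟨(2:ℝ)^(lam - p⁻¹), (((2:ℝ)^((2:ℝ)+p) + 1) / (p*(-lam))) ^ p⁻¹, r₀,
      Real.rpow_pos_of_pos two_pos _, Real.rpow_pos_of_pos hK _, hr₀pos, ?_⟩
    intro r hr
    obtain ⟨⟨hr4, hre⟩, hB⟩ := hr₀ r hr
    have h0 : 0 < r := hr.1
    have h2 : 2 ≤ ellell r := ellell_ge_two h0 hre
    have hRnn : (0:ℝ) ≤ r ^ lam * ell r ^ (-p⁻¹) * ellell r ^ (-p⁻¹) *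
        ellellell r ^ (-1:ℝ) :=
      mul_nonneg (mul_nonneg (mul_nonneg (Real.rpow_nonneg h0.le _)
        (Real.rpow_nonneg (ell_pos r).le _)) (Real.rpow_nonneg (ellell_pos r).le _))
        (Real.rpow_nonneg (ellellell_pos r).le _)
    have hμeq : eLpNorm (fun s : ℝ =>
          s ^ (lam - p⁻¹) * ell s ^ (-p⁻¹) * ellell s ^ (-p⁻¹) * ellellell s ^ (-1:ℝ))
          q' (volume.restrict (Ioo r (1-r))) =
        (∫⁻ s in Ioo r (1-r), ENNReal.ofReal (gg (p*lam-1) p s)) ^ (1/p) := by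
      rw [eLpNorm_eq_lintegral_rpow_enorm_toReal hq'0 hq'top]
      congr 1
      apply setLIntegral_congr_fun measurableSet_Ioo
      intro s hs
      have hs0 : 0 < s := h0.trans hs.1
      have hfs0 : 0 ≤ s ^ (lam - p⁻¹) * ell s ^ (-p⁻¹) * ellell s ^ (-p⁻¹) *
          ellellell s ^ (-1:ℝ) :=
        mul_nonneg (mul_nonneg (mul_nonneg (Real.rpow_nonneg hs0.le _)
          (Real.rpow_nonneg (ell_pos s).le _)) (Real.rpow_nonneg (ellell_pos s).le _))
          (Real.rpow_nonneg (ellellell_pos s).le _)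
      beta_reduce
      rw [Real.enorm_eq_ofReal hfs0, ENNReal.ofReal_rpow_of_nonneg hfs0 hp.le,
        prod_rpow (lam - p⁻¹) hp hs0, show p*(lam - p⁻¹) = p*lam - 1 by field_simp]
    rw [hμeq]
    have hlow := lower_finite hp hlam h0 hr4
    have hup := upper_finite hp hlam h0 hr4 h2 hB
    constructor
    · have key : ((2:ℝ)^(lam - p⁻¹) * (r ^ lam * ell r ^ (-p⁻¹) * ellell r ^ (-p⁻¹) *
          ellellell r ^ (-1:ℝ))) ^ p = (2:ℝ)^(p*lam-1) * gg (p*lam) p r := by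
        rw [Real.mul_rpow (Real.rpow_nonneg (by norm_num) _) hRnn, prod_rpow lam hp h0,
          ← Real.rpow_mul (by norm_num : (0:ℝ) ≤ 2),
          show (lam - p⁻¹)*p = p*lam - 1 by field_simp]
      calc ENNReal.ofReal ((2:ℝ)^(lam - p⁻¹) * (r ^ lam * ell r ^ (-p⁻¹) *
              ellell r ^ (-p⁻¹) * ellellell r ^ (-1:ℝ)))
          = (ENNReal.ofReal ((2:ℝ)^(lam - p⁻¹) * (r ^ lam * ell r ^ (-p⁻¹) *
              ellell r ^ (-p⁻¹) * ellellell r ^ (-1:ℝ))) ^ p) ^ (1/p) := by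
            rw [one_div, ENNReal.rpow_rpow_inv hp.ne']
        _ = (ENNReal.ofReal ((2:ℝ)^(p*lam-1) * gg (p*lam) p r)) ^ (1/p) := by
            rw [ENNReal.ofReal_rpow_of_nonneg (mul_nonneg
              (Real.rpow_nonneg (by norm_num) _) hRnn) hp.le, key]
        _ ≤ (∫⁻ s in Ioo r (1-r), ENNReal.ofReal (gg (p*lam-1) p s)) ^ (1/p) :=
            ENNReal.rpow_le_rpow hlow (by positivity)
    · have hCp : ((((2:ℝ)^((2:ℝ)+p) + 1) / (p*(-lam))) ^ p⁻¹) ^ p =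
          ((2:ℝ)^((2:ℝ)+p) + 1) / (p*(-lam)) := Real.rpow_inv_rpow hK.le hp.ne'
      have key : ((((2:ℝ)^((2:ℝ)+p) + 1) / (p*(-lam))) ^ p⁻¹ * (r ^ lam * ell r ^ (-p⁻¹) *
          ellell r ^ (-p⁻¹) * ellellell r ^ (-1:ℝ))) ^ p =
          ((2:ℝ)^((2:ℝ)+p) + 1) / (p*(-lam)) * gg (p*lam) p r := by
        rw [Real.mul_rpow (Real.rpow_nonneg hK.le _) hRnn, prod_rpow lam hp h0, hCp]
      calc (∫⁻ s in Ioo r (1-r), ENNReal.ofReal (gg (p*lam-1) p s)) ^ (1/p)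
          ≤ (ENNReal.ofReal (((2:ℝ)^((2:ℝ)+p) + 1) / (p*(-lam)) * gg (p*lam) p r)) ^ (1/p) :=
            ENNReal.rpow_le_rpow hup (by positivity)
        _ = ENNReal.ofReal ((((2:ℝ)^((2:ℝ)+p) + 1) / (p*(-lam))) ^ p⁻¹ * (r ^ lam *
              ell r ^ (-p⁻¹) * ellell r ^ (-p⁻¹) * ellellell r ^ (-1:ℝ))) := by
            rw [← key, ← ENNReal.ofReal_rpow_of_nonneg (mul_nonneg
              (Real.rpow_nonneg hK.le _) hRnn) hp.le, one_div,
              ENNReal.rpow_rpow_inv hp.ne']
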